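/- In the standing setup, suppose additionally that f is an exact lumping of MC(α_X,P_X) to MC(α_Z,P_Z) with respect to a family (ν_c)_{c∈C}. Then the projection proj²: Δ' → B, (a,b) ↦ b, is an exact lumping of MC(α,P) to MC(α_Y,P_Y); explicitly, the family (μ_y)_{y∈B} defined by μ_y(a,b) = ν_{g(b)}(a)·φ(a,b) if b = y and 0 otherwise satisfies the exact lumping equation for P and P_Y, and α = Σ_{y∈B} α_Y(y) μ_y. -/

import Mathlib

open MeasureTheory Filter Topology
open scoped ENNReal Classical

/-- A probability vector on a countable state space. -/
def IsProbVec {U : Type*} (v : U → ℝ≥0∞) : Prop := ∑' u, v u = 1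

/-- A row-stochastic matrix on a countable state space. -/
def IsStochastic {U : Type*} (P : U → U → ℝ≥0∞) : Prop := ∀ u, ∑' w, P u w = 1

/-- `μ` is the law of the time-homogeneous Markov chain `MC(v,P)`. -/
def IsMarkovChain {U : Type*} [MeasurableSpace U]
    (v : U → ℝ≥0∞) (P : U → U → ℝ≥0∞) (μ : Measure (ℕ → U)) : Prop :=
  IsProbabilityMeasure μ ∧ IsProbVec v ∧ IsStochastic P ∧
    ∀ (k : ℕ) (a : ℕ → U),
      μ {ω | ∀ i ≤ k, ω i = a i} = v (a 0) * ∏ i ∈ Finset.range k, P (a i) (a (i + 1))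

/-- `Δ(f,g) = {(a,b) : f a = g b}`. -/
abbrev Delta {A B C : Type*} (f : A → C) (g : B → C) :=
  {p : A × B // f p.1 = g p.2}

/-- The matrix `R` on `Δ(f,g)`:
`R((a,b),(a',b')) = P_X(a,a') * P_Y(b,b') / P_Z(f a, f a')` when `P_Z(f a, f a') > 0`,
else `0`. -/
noncomputable def Rmat {A B C : Type*} (PX : A → A → ℝ≥0∞) (PY : B → B → ℝ≥0∞)
    (PZ : C → C → ℝ≥0∞) (f : A → C) (g : B → C) (d e : Delta f g) : ℝ≥0∞ :=
  if PZ (f d.1.1) (f e.1.1) ≠ 0 then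
    PX d.1.1 e.1.1 * PY d.1.2 e.1.2 / PZ (f d.1.1) (f e.1.1)
  else 0

/-- `phim R m = R^m 1`, computed coordinatewise in `[0,∞]`. -/
noncomputable def phim {D : Type*} (R : D → D → ℝ≥0∞) : ℕ → D → ℝ≥0∞
  | 0 => fun _ => 1
  | m + 1 => fun d => ∑' e, R d e * phim R m e

/-- The initial distribution `α` of the coupled chain on `Δ'`:
`α(a,b) = (α_X(a) * α_Y(b) / α_Z(c)) * φ(a,b)` when `α_Z(c) > 0`, and `0` otherwise. -/
noncomputable def alphaW {A B C : Type*} (αX : A → ℝ≥0∞) (αY : B → ℝ≥0∞) (αZ : C → ℝ≥0∞)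
    (f : A → C) (g : B → C) (φ : Delta f g → ℝ≥0∞) (d : Delta f g) : ℝ≥0∞ :=
  if αZ (f d.1.1) ≠ 0 then αX d.1.1 * αY d.1.2 / αZ (f d.1.1) * φ d else 0



set_option linter.unusedSectionVars false
set_option maxHeartbeats 1000000


section paths
variable {U C : Type*}

noncomputable def Ow (P : U → U → ℝ≥0∞) (h : U → C) : U → List C → ℝ≥0∞
  | _, [] => 1
  | u, (c :: L) => ∑' u' : U, if h u' = c then P u u' * Ow P h u' L else 0

noncomputable def Zw (PZ : C → C → ℝ≥0∞) : C → List C → ℝ≥0∞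
  | _, [] => 1
  | c, (c' :: L) => PZ c c' * Zw PZ c' L

def ZAll (PZ : C → C → ℝ≥0∞) : C → List C → Prop
  | _, [] => True
  | c, (c' :: L) => PZ c c' ≠ 0 ∧ ZAll PZ c' L

lemma tsum_fiber (h : U → C) (c : C) (F : U → ℝ≥0∞) :
    ∑' u : {u : U // h u = c}, F u.1 = ∑' u : U, if h u = c then F u else 0 := by
  have := tsum_subtype {u : U | h u = c} F
  simp [Set.indicator_apply, Set.mem_setOf_eq] at this
  exact this

lemma Ow_cons (P : U → U → ℝ≥0∞) (h : U → C) (u : U) (c : C) (L : List C) :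
    Ow P h u (c :: L) = ∑' u' : {u' : U // h u' = c}, P u u'.1 * Ow P h u'.1 L := by
  rw [tsum_fiber h c fun u' => P u u' * Ow P h u' L]; rfl

abbrev LenL (C : Type*) (m : ℕ) := {L : List C // L.length = m}

noncomputable def lenSucc (C : Type*) (m : ℕ) : LenL C (m+1) ≃ C × LenL C m where
  toFun L := match L with
    | ⟨[], h⟩ => by simp at h
    | ⟨c :: L, h⟩ => (c, ⟨L, by simpa using h⟩)
  invFun p := ⟨p.1 :: p.2.1, by simp [p.2.2]⟩
  left_inv L := by
    rcases L with ⟨L, h⟩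
    cases L with
    | nil => simp at h
    | cons c L => rfl
  right_inv p := by rcases p with ⟨c, L, h⟩; rfl

lemma tsum_len_succ (m : ℕ) (F : List C → ℝ≥0∞) :
    ∑' L : LenL C (m+1), F L.1 = ∑' c : C, ∑' L : LenL C m, F (c :: L.1) := by
  rw [← Equiv.tsum_eq (lenSucc C m).symm (fun L : LenL C (m+1) => F L.1), ← ENNReal.tsum_prod]
  rfl

lemma tsum_len_zero (F : List C → ℝ≥0∞) :
    ∑' L : LenL C 0, F L.1 = F [] := by
  rw [tsum_eq_single (⟨[], rfl⟩ : LenL C 0)]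
  · rintro ⟨L, hL⟩ hne
    rcases List.length_eq_zero_iff.mp hL with rfl
    simp at hne

lemma Ow_sum {P : U → U → ℝ≥0∞} (hP : IsStochastic P) (h : U → C) :
    ∀ (m : ℕ) (u : U), ∑' L : LenL C m, Ow P h u L.1 = 1 := by
  intro m
  induction m with
  | zero =>
    intro u
    rw [tsum_len_zero (Ow P h u)]; rfl
  | succ m ih =>
    intro u
    rw [tsum_len_succ m (Ow P h u)]
    have : ∀ c : C, ∑' L : LenL C m, Ow P h u (c :: L.1)
        = ∑' u' : U, if h u' = c then P u u' else 0 := by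
      intro c
      have h1 : ∀ L : LenL C m, Ow P h u (c :: L.1)
          = ∑' u' : U, if h u' = c then P u u' * Ow P h u' L.1 else 0 := fun _ => rfl
      rw [tsum_congr h1, ENNReal.tsum_comm]
      congr 1; ext u'
      by_cases hu : h u' = c
      · simp only [hu, if_true, ENNReal.tsum_mul_left, ih u', mul_one]
      · simp [hu]
    rw [tsum_congr this, ENNReal.tsum_comm]
    have : ∀ u' : U, (∑' c : C, if h u' = c then P u u' else 0) = P u u' := by
      intro u'
      rw [tsum_eq_single (h u') (by intro c hc; simp only [ite_eq_right_iff]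
                                    intro h'; exact absurd h'.symm hc)]
      simp
    rw [tsum_congr this, hP u]

end paths

section exact
variable {A C : Type*} (f : A → C) (ν : C → A → ℝ≥0∞) (PX : A → A → ℝ≥0∞) (PZ : C → C → ℝ≥0∞)

lemma nu_fiber_sum (hν0 : ∀ (c : C) (a : A), f a ≠ c → ν c a = 0)
    (hν1 : ∀ c : C, ∑' a : A, ν c a = 1) (c : C) (F : A → ℝ≥0∞) (hF : ∀ a, f a = c → F a = 1) :
    ∑' a : {x : A // f x = c}, ν c a.1 * F a.1 = 1 := by
  have h1 : ∀ a : {x : A // f x = c}, ν c a.1 * F a.1 = ν c a.1 := by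
    intro a; rw [hF a.1 a.2, mul_one]
  rw [tsum_congr h1]
  exact (tsum_subtype_eq_of_support_subset (f := ν c) (s := {x : A | f x = c})
      (fun a ha => by by_contra h; exact ha (hν0 c a h))).trans (hν1 c)

lemma Ow_exact (hν0 : ∀ (c : C) (a : A), f a ≠ c → ν c a = 0)
    (hν1 : ∀ c : C, ∑' a : A, ν c a = 1)
    (hEL : ∀ (c c' : C) (a' : A), f a' = c' →
      ∑' a : {x : A // f x = c}, ν c a.1 * PX a.1 a' = PZ c c' * ν c' a') :
    ∀ (L : List C) (c : C), ∑' a : {x : A // f x = c}, ν c a.1 * Ow PX f a.1 L = Zw PZ c L := by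
  intro L
  induction L with
  | nil => intro c; exact nu_fiber_sum f ν hν0 hν1 c _ (fun a _ => rfl)
  | cons c' L ih =>
    intro c
    have h1 : ∀ a : {x : A // f x = c}, ν c a.1 * Ow PX f a.1 (c' :: L)
        = ∑' a' : {x : A // f x = c'}, ν c a.1 * (PX a.1 a'.1 * Ow PX f a'.1 L) := by
      intro a
      rw [show Ow PX f a.1 (c' :: L) = ∑' a' : A, if f a' = c' then PX a.1 a' * Ow PX f a' L else 0 from rfl,
        ← tsum_fiber f c' (fun a' => PX a.1 a' * Ow PX f a' L), ENNReal.tsum_mul_left]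
    rw [tsum_congr h1, ENNReal.tsum_comm]
    have h2 : ∀ a' : {x : A // f x = c'},
        (∑' a : {x : A // f x = c}, ν c a.1 * (PX a.1 a'.1 * Ow PX f a'.1 L))
        = (PZ c c' * ν c' a'.1) * Ow PX f a'.1 L := by
      intro a'
      have : ∀ a : {x : A // f x = c}, ν c a.1 * (PX a.1 a'.1 * Ow PX f a'.1 L)
          = (ν c a.1 * PX a.1 a'.1) * Ow PX f a'.1 L := fun a => by ring
      rw [tsum_congr this, ENNReal.tsum_mul_right, hEL c c' a'.1 a'.2]
    rw [tsum_congr h2]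
    have h3 : ∀ a' : {x : A // f x = c'}, (PZ c c' * ν c' a'.1) * Ow PX f a'.1 L
        = PZ c c' * (ν c' a'.1 * Ow PX f a'.1 L) := fun a' => by ring
    rw [tsum_congr h3, ENNReal.tsum_mul_left, ih c', Zw]

lemma Zw_le_one {PZ : C → C → ℝ≥0∞} (hPZ : IsStochastic PZ) :
    ∀ (L : List C) (c : C), Zw PZ c L ≤ 1 := by
  intro L
  induction L with
  | nil => intro c; exact le_refl 1
  | cons c' L ih =>
    intro c
    calc PZ c c' * Zw PZ c' L ≤ PZ c c' * 1 := mul_le_mul_right (ih c') _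
    _ ≤ 1 := by rw [mul_one]; exact le_trans (ENNReal.le_tsum c') (le_of_eq (hPZ c))

lemma Zw_ne_top {PZ : C → C → ℝ≥0∞} (hPZ : IsStochastic PZ) (L : List C) (c : C) :
    Zw PZ c L ≠ ∞ := fun h => by
  have := Zw_le_one hPZ L c; rw [h] at this; exact (by simp at this)

lemma Zw_ne_zero {PZ : C → C → ℝ≥0∞} : ∀ (L : List C) (c : C), ZAll PZ c L → Zw PZ c L ≠ 0 := by
  intro L
  induction L with
  | nil => intro c _; simp [Zw]
  | cons c' L ih =>
    intro c hA
    rcases hA with ⟨h1, h2⟩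
    simp only [Zw, ne_eq, mul_eq_zero, not_or]
    exact ⟨h1, ih c' h2⟩

end exact

section delta
variable {A B C : Type*} (f : A → C) (g : B → C)

def deltaEquiv : Delta f g ≃ Σ c : C, ({a : A // f a = c} × {b : B // g b = c}) where
  toFun d := ⟨g d.1.2, ⟨⟨d.1.1, d.2⟩, ⟨d.1.2, rfl⟩⟩⟩
  invFun p := ⟨(p.2.1.1, p.2.2.1), p.2.1.2.trans p.2.2.2.symm⟩
  left_inv d := rfl
  right_inv p := by rcases p with ⟨c, ⟨a, ha⟩, ⟨b, hb⟩⟩; subst hb; rfl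

lemma tsum_delta (F : Delta f g → ℝ≥0∞) :
    ∑' e : Delta f g, F e
      = ∑' c : C, ∑' a : {a : A // f a = c}, ∑' b : {b : B // g b = c},
          F ⟨(a.1, b.1), a.2.trans b.2.symm⟩ := by
  rw [← Equiv.tsum_eq (deltaEquiv f g).symm F,
    ENNReal.tsum_sigma' (fun p => F ((deltaEquiv f g).symm p))]
  congr 1; ext c
  rw [← ENNReal.tsum_prod]
  rfl

end delta

section exp
variable {A B C : Type*} (PX : A → A → ℝ≥0∞) (PY : B → B → ℝ≥0∞) (PZ : C → C → ℝ≥0∞)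
  (f : A → C) (g : B → C)

noncomputable def WW (d : Delta f g) (L : List C) : ℝ≥0∞ :=
  if ZAll PZ (f d.1.1) L then Ow PX f d.1.1 L * Ow PY g d.1.2 L / Zw PZ (f d.1.1) L else 0

lemma phim_eq (hPZ : IsStochastic PZ) :
    ∀ (m : ℕ) (d : Delta f g),
      phim (Rmat PX PY PZ f g) m d = ∑' L : LenL C m, WW PX PY PZ f g d L.1 := by
  intro m
  induction m with
  | zero =>
    intro d
    rw [tsum_len_zero (WW PX PY PZ f g d)]
    show (1 : ℝ≥0∞) = WW PX PY PZ f g d []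
    simp [WW, ZAll, Ow, Zw]
  | succ m ih =>
    intro d
    obtain ⟨⟨a, b⟩, hd⟩ := d
    show (∑' e, Rmat PX PY PZ f g ⟨(a, b), hd⟩ e * phim (Rmat PX PY PZ f g) m e) = _
    rw [tsum_congr (fun e => by rw [ih e]),
      tsum_delta f g (fun e => Rmat PX PY PZ f g ⟨(a, b), hd⟩ e * ∑' L : LenL C m, WW PX PY PZ f g e L.1),
      tsum_len_succ m (WW PX PY PZ f g ⟨(a, b), hd⟩)]
    congr 1; ext c'
    by_cases hz : PZ (f a) c' = 0
    · -- both sides vanish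
      have hL : ∀ a' : {a' : A // f a' = c'}, ∀ b' : {b' : B // g b' = c'},
          Rmat PX PY PZ f g ⟨(a, b), hd⟩ ⟨(a'.1, b'.1), a'.2.trans b'.2.symm⟩ = 0 := by
        intro a' b'
        simp only [Rmat, a'.2, hz]
        simp
      have h1 : ∀ a' : {a' : A // f a' = c'}, (∑' b' : {b' : B // g b' = c'},
          Rmat PX PY PZ f g ⟨(a, b), hd⟩ ⟨(a'.1, b'.1), a'.2.trans b'.2.symm⟩
            * ∑' L : LenL C m, WW PX PY PZ f g ⟨(a'.1, b'.1), a'.2.trans b'.2.symm⟩ L.1) = 0 := by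
        intro a'; rw [tsum_congr (fun b' => by rw [hL a' b', zero_mul])]; exact tsum_zero
      rw [tsum_congr h1, tsum_zero]
      have h2 : ∀ L : LenL C m, WW PX PY PZ f g ⟨(a, b), hd⟩ (c' :: L.1) = 0 := by
        intro L
        simp only [WW, ZAll]
        exact if_neg (show ¬(PZ (f a) c' ≠ 0 ∧ ZAll PZ c' L.1) by simp [hz])
      rw [tsum_congr h2, tsum_zero]
    · -- PZ (f a) c' ≠ 0
      have hptop : PZ (f a) c' ≠ ∞ :=
        fun h => by have := (ENNReal.le_tsum c').trans (le_of_eq (hPZ (f a))); rw [h] at this; simp at this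
      -- rewrite Rmat value
      have hR : ∀ (a' : {a' : A // f a' = c'}) (b' : {b' : B // g b' = c'}),
          Rmat PX PY PZ f g ⟨(a, b), hd⟩ ⟨(a'.1, b'.1), a'.2.trans b'.2.symm⟩
            = PX a a'.1 * PY b b'.1 / PZ (f a) c' := by
        intro a' b'
        simp only [Rmat, a'.2]
        rw [if_pos hz]
      -- swap sums so that L is outermost
      have hswap : (∑' a' : {a' : A // f a' = c'}, ∑' b' : {b' : B // g b' = c'},
          (PX a a'.1 * PY b b'.1 / PZ (f a) c')
            * ∑' L : LenL C m, WW PX PY PZ f g ⟨(a'.1, b'.1), a'.2.trans b'.2.symm⟩ L.1)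
          = ∑' L : LenL C m, ∑' a' : {a' : A // f a' = c'}, ∑' b' : {b' : B // g b' = c'},
            (PX a a'.1 * PY b b'.1 / PZ (f a) c')
              * WW PX PY PZ f g ⟨(a'.1, b'.1), a'.2.trans b'.2.symm⟩ L.1 := by
        rw [tsum_congr (fun a' => tsum_congr (fun b' => ENNReal.tsum_mul_left.symm))]
        rw [tsum_congr (fun a' => ENNReal.tsum_comm)]
        exact ENNReal.tsum_comm
      rw [tsum_congr (fun a' => tsum_congr (fun b' => by rw [hR a' b'])), hswap]
      congr 1; ext L
      by_cases hA : ZAll PZ c' L.1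
      · -- main computation
        have hWW : ∀ (a' : {a' : A // f a' = c'}) (b' : {b' : B // g b' = c'}),
            WW PX PY PZ f g ⟨(a'.1, b'.1), a'.2.trans b'.2.symm⟩ L.1
              = Ow PX f a'.1 L.1 * Ow PY g b'.1 L.1 / Zw PZ c' L.1 := by
          intro a' b'
          simp only [WW, a'.2]
          rw [if_pos hA]
        rw [tsum_congr (fun a' => tsum_congr (fun b' => by rw [hWW a' b']))]
        have hzne : Zw PZ c' L.1 ≠ 0 := Zw_ne_zero L.1 c' hA
        have hztop : Zw PZ c' L.1 ≠ ∞ := Zw_ne_top hPZ L.1 c'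
        set p := PZ (f a) c'
        set z := Zw PZ c' L.1
        have hterm : ∀ (a' : {a' : A // f a' = c'}) (b' : {b' : B // g b' = c'}),
            (PX a a'.1 * PY b b'.1 / p) * (Ow PX f a'.1 L.1 * Ow PY g b'.1 L.1 / z)
              = ((PX a a'.1 * Ow PX f a'.1 L.1) * (PY b b'.1 * Ow PY g b'.1 L.1)) * (p⁻¹ * z⁻¹) := by
          intro a' b'
          rw [div_eq_mul_inv, div_eq_mul_inv]
          ring
        rw [tsum_congr (fun a' => tsum_congr (fun b' => hterm a' b'))]
        have hfact : (∑' a' : {a' : A // f a' = c'}, ∑' b' : {b' : B // g b' = c'},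
            ((PX a a'.1 * Ow PX f a'.1 L.1) * (PY b b'.1 * Ow PY g b'.1 L.1)) * (p⁻¹ * z⁻¹))
            = ((∑' a' : {a' : A // f a' = c'}, PX a a'.1 * Ow PX f a'.1 L.1)
              * (∑' b' : {b' : B // g b' = c'}, PY b b'.1 * Ow PY g b'.1 L.1)) * (p⁻¹ * z⁻¹) := by
          have inner : ∀ a' : {a' : A // f a' = c'},
              (∑' b' : {b' : B // g b' = c'},
                ((PX a a'.1 * Ow PX f a'.1 L.1) * (PY b b'.1 * Ow PY g b'.1 L.1)) * (p⁻¹ * z⁻¹))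
              = (PX a a'.1 * Ow PX f a'.1 L.1)
                * ((∑' b' : {b' : B // g b' = c'}, PY b b'.1 * Ow PY g b'.1 L.1) * (p⁻¹ * z⁻¹)) := by
            intro a'
            rw [tsum_congr (fun b' : {b' : B // g b' = c'} =>
              show ((PX a a'.1 * Ow PX f a'.1 L.1) * (PY b b'.1 * Ow PY g b'.1 L.1)) * (p⁻¹ * z⁻¹)
                = ((PX a a'.1 * Ow PX f a'.1 L.1) * (p⁻¹ * z⁻¹)) * (PY b b'.1 * Ow PY g b'.1 L.1)
                from by ring), ENNReal.tsum_mul_left]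
            ring
          rw [tsum_congr inner, ENNReal.tsum_mul_right]
          ring
        rw [hfact]
        show _ = WW PX PY PZ f g ⟨(a, b), hd⟩ (c' :: L.1)
        simp only [WW]
        rw [if_pos (show ZAll PZ (f a) (c' :: L.1) from ⟨hz, hA⟩)]
        rw [Ow_cons PX f a c' L.1, Ow_cons PY g b c' L.1]
        show _ = _ / Zw PZ (f a) (c' :: L.1)
        rw [show Zw PZ (f a) (c' :: L.1) = p * z from rfl]
        rw [div_eq_mul_inv, ENNReal.mul_inv (Or.inl hz) (Or.inl hptop)]
      · -- ZAll fails for tail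
        have hWW0 : ∀ (a' : {a' : A // f a' = c'}) (b' : {b' : B // g b' = c'}),
            WW PX PY PZ f g ⟨(a'.1, b'.1), a'.2.trans b'.2.symm⟩ L.1 = 0 := by
          intro a' b'
          simp only [WW, a'.2]
          rw [if_neg hA]
        rw [tsum_congr (fun a' => tsum_congr (fun b' => by rw [hWW0 a' b', mul_zero]))]
        simp only [tsum_zero]
        simp only [WW, ZAll]
        exact (if_neg (show ¬(PZ (f a) c' ≠ 0 ∧ ZAll PZ c' L.1) by rintro ⟨-, h2⟩; exact hA h2)).symm
end exp

section markov
variable {U : Type*} [Countable U] [MeasurableSpace U] [MeasurableSingletonClass U]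
  {v : U → ℝ≥0∞} {P : U → U → ℝ≥0∞} {μ : Measure (ℕ → U)}

noncomputable def cylw (v : U → ℝ≥0∞) (P : U → U → ℝ≥0∞) (t : ℕ) (π : Fin (t+1) → U) : ℝ≥0∞ :=
  v (π 0) * ∏ i : Fin t, P (π i.castSucc) (π i.succ)

lemma cylw_snoc (t : ℕ) (π : Fin (t+1) → U) (u : U) :
    cylw v P (t+1) (Fin.snoc π u) = cylw v P t π * P (π (Fin.last t)) u := by
  unfold cylw
  have hsplit := Fin.prod_univ_castSucc
    (fun i : Fin (t+1) => P ((Fin.snoc π u : Fin (t+2) → U) i.castSucc)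
      ((Fin.snoc π u : Fin (t+2) → U) i.succ))
  rw [hsplit]
  have h0 : ((Fin.snoc π u : Fin (t+2) → U) (0 : Fin (t+2))) = π 0 := by
    rw [show (0 : Fin (t+2)) = (0 : Fin (t+1)).castSucc from rfl, Fin.snoc_castSucc]
  have h1 : ∀ i : Fin t,
      P ((Fin.snoc π u : Fin (t+2) → U) i.castSucc.castSucc)
          ((Fin.snoc π u : Fin (t+2) → U) i.castSucc.succ)
        = P (π i.castSucc) (π i.succ) := by
    intro i
    rw [Fin.snoc_castSucc, Fin.succ_castSucc, Fin.snoc_castSucc]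
  have h2 : P ((Fin.snoc π u : Fin (t+2) → U) (Fin.last t).castSucc)
        ((Fin.snoc π u : Fin (t+2) → U) (Fin.last t).succ)
      = P (π (Fin.last t)) u := by
    rw [Fin.snoc_castSucc, show (Fin.last t).succ = Fin.last (t+1) from rfl, Fin.snoc_last]
  rw [Finset.prod_congr rfl (fun i _ => h1 i), h0, h2]
  ring

lemma meas_cyl (hμ : IsMarkovChain v P μ) (t : ℕ) (π : Fin (t+1) → U) :
    μ {ω | ∀ i : Fin (t+1), ω i.1 = π i} = cylw v P t π := by
  have hlt : ∀ i : ℕ, min i t < t + 1 := fun i => by omega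
  set a : ℕ → U := fun n => π ⟨min n t, hlt n⟩ with ha
  have haeq : ∀ (i : ℕ) (h : i < t+1), a i = π ⟨i, h⟩ := by
    intro i h
    simp only [ha]
    congr 1
    exact Fin.ext (by simp; omega)
  have hset : {ω : ℕ → U | ∀ i ≤ t, ω i = a i} = {ω | ∀ i : Fin (t+1), ω i.1 = π i} := by
    ext ω
    constructor
    · intro h i
      have h' := h i.1 (by omega)
      rw [haeq i.1 i.2] at h'
      rwa [show (⟨i.1, i.2⟩ : Fin (t+1)) = i from Fin.ext rfl] at h'
    · intro h i hi
      rw [haeq i (by omega)]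
      exact h ⟨i, by omega⟩
  have hcyl := hμ.2.2.2 t a
  rw [hset] at hcyl
  rw [hcyl]
  unfold cylw
  have e0 : a 0 = π 0 := (haeq 0 (by omega)).trans (congrArg π (Fin.ext rfl))
  rw [e0]
  congr 1
  rw [← Fin.prod_univ_eq_prod_range (fun i => P (a i) (a (i+1))) t]
  apply Finset.prod_congr rfl
  intro i _
  rw [haeq i.1 (by omega), haeq (i.1+1) (by omega)]
  exact congrArg₂ P (congrArg π (Fin.ext rfl)) (congrArg π (Fin.ext rfl))

lemma cyl_measurable (t : ℕ) (π : Fin (t+1) → U) :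
    MeasurableSet {ω : ℕ → U | ∀ i : Fin (t+1), ω i.1 = π i} := by
  have : {ω : ℕ → U | ∀ i : Fin (t+1), ω i.1 = π i}
      = ⋂ i : Fin (t+1), (fun ω : ℕ → U => ω i.1) ⁻¹' {π i} := by
    ext ω; simp [Set.mem_iInter]
  rw [this]
  exact MeasurableSet.iInter fun i => (measurable_pi_apply i.1) (measurableSet_singleton (π i))

lemma meas_proj (hμ : IsMarkovChain v P μ) (t : ℕ) (S : Set (Fin (t+1) → U)) :
    μ {ω | (fun i : Fin (t+1) => ω i.1) ∈ S} = ∑' π : S, cylw v P t π.1 := by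
  have hset : {ω : ℕ → U | (fun i : Fin (t+1) => ω i.1) ∈ S}
      = ⋃ π : S, {ω : ℕ → U | ∀ i : Fin (t+1), ω i.1 = π.1 i} := by
    ext ω
    simp only [Set.mem_setOf_eq, Set.mem_iUnion]
    constructor
    · intro h; exact ⟨⟨_, h⟩, fun i => rfl⟩
    · rintro ⟨⟨π, hπ⟩, h⟩
      have : (fun i : Fin (t+1) => ω i.1) = π := funext h
      rwa [this]
  have hdisj : Pairwise (Function.onFun Disjoint
      (fun π : S => {ω : ℕ → U | ∀ i : Fin (t+1), ω i.1 = π.1 i})) := by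
    rintro ⟨π, hπ⟩ ⟨π', hπ'⟩ hne
    simp only [Function.onFun, Set.disjoint_left]
    intro ω h1 h2
    apply hne
    apply Subtype.ext
    funext i
    exact (h1 i).symm.trans (h2 i)
  rw [hset, measure_iUnion hdisj (fun π => cyl_measurable t π.1)]
  exact tsum_congr fun π => meas_cyl hμ t π.1
end markov

def snocEquiv {U C : Type*} (t : ℕ) (S : Set (Fin (t+1) → U)) (h : U → C) (c : C) :
    ↥{π' : Fin (t+2) → U | Fin.init π' ∈ S ∧ h (π' (Fin.last (t+1))) = c}
      ≃ ↥S × {u : U // h u = c} where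
  toFun π' := (⟨Fin.init π'.1, π'.2.1⟩, ⟨π'.1 (Fin.last (t+1)), π'.2.2⟩)
  invFun p := ⟨Fin.snoc p.1.1 p.2.1,
    ⟨by rw [Fin.init_snoc]; exact p.1.2, by rw [Fin.snoc_last]; exact p.2.2⟩⟩
  left_inv π' := Subtype.ext (Fin.snoc_init_self π'.1)
  right_inv p := by refine Prod.ext (Subtype.ext ?_) (Subtype.ext ?_) <;> simp

lemma snocEquiv_symm_coe {U C : Type*} (t : ℕ) (S : Set (Fin (t+1) → U)) (h : U → C) (c : C)
    (p : ↥S × {u : U // h u = c}) :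
    (((snocEquiv t S h c).symm p).1 : Fin (t+2) → U) = Fin.snoc p.1.1 p.2.1 := rfl

section owmeas
variable {U : Type*} [Countable U] [MeasurableSpace U] [MeasurableSingletonClass U]
  {v : U → ℝ≥0∞} {P : U → U → ℝ≥0∞} {μ : Measure (ℕ → U)}

lemma ow_meas (hμ : IsMarkovChain v P μ) {C : Type*} (h : U → C) :
    ∀ (L : List C) (t : ℕ) (S : Set (Fin (t+1) → U)),
      μ {ω | (fun i : Fin (t+1) => ω i.1) ∈ S ∧ ∀ i : Fin L.length, h (ω (t+1+i.1)) = L.get i}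
        = ∑' π : S, cylw v P t π.1 * Ow P h (π.1 (Fin.last t)) L := by
  intro L
  induction L with
  | nil =>
    intro t S
    have hset : {ω : ℕ → U | (fun i : Fin (t+1) => ω i.1) ∈ S
        ∧ ∀ i : Fin ([] : List C).length, h (ω (t+1+i.1)) = [].get i}
        = {ω : ℕ → U | (fun i : Fin (t+1) => ω i.1) ∈ S} := by
      ext ω
      simp only [Set.mem_setOf_eq, List.length_nil, and_iff_left_iff_imp]
      intro _ i
      exact absurd i.2 (by omega)
    rw [hset, meas_proj hμ t S]
    exact tsum_congr fun π => (mul_one _).symm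
  | cons c L ih =>
    intro t S
    set S' : Set (Fin (t+2) → U) :=
      {π' | Fin.init π' ∈ S ∧ h (π' (Fin.last (t+1))) = c} with hS'
    have hproj : ∀ ω : ℕ → U, Fin.init (fun i : Fin (t+2) => ω i.1)
        = (fun i : Fin (t+1) => ω i.1) := by
      intro ω; funext i; rfl
    have hset : {ω : ℕ → U | (fun i : Fin (t+1) => ω i.1) ∈ S
          ∧ ∀ i : Fin (c :: L).length, h (ω (t+1+i.1)) = (c :: L).get i}
        = {ω : ℕ → U | (fun i : Fin (t+2) => ω i.1) ∈ S'
          ∧ ∀ i : Fin L.length, h (ω ((t+1)+1+i.1)) = L.get i} := by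
      ext ω
      simp only [Set.mem_setOf_eq, hS', Set.mem_setOf_eq]
      constructor
      · rintro ⟨hS, hall⟩
        refine ⟨⟨by rw [hproj ω]; exact hS, ?_⟩, ?_⟩
        · have := hall ⟨0, by simp⟩
          simpa using this
        · intro i
          have := hall ⟨i.1+1, by have := i.2; simp only [List.length_cons] at *; omega⟩
          rw [show t+1+(i.1+1) = (t+1)+1+i.1 from by omega] at this
          exact this
      · rintro ⟨⟨hS, hlast⟩, hall⟩
        rw [hproj ω] at hS
        refine ⟨hS, ?_⟩
        intro i
        rcases i with ⟨j, hj⟩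
        match j with
        | 0 => simpa using hlast
        | (j'+1) =>
          have := hall ⟨j', by simpa using hj⟩
          rw [show (t+1)+1+j' = t+1+(j'+1) from by omega] at this
          exact this
    rw [hset, ih (t+1) S']
    -- reindex over S' ≃ S × fiber
    have hS'eq : S' = {π' : Fin (t+2) → U | Fin.init π' ∈ S ∧ h (π' (Fin.last (t+1))) = c} := rfl
    rw [hS'eq]
    set E := snocEquiv t S h c with hE
    rw [← Equiv.tsum_eq E.symm
      (fun π' : S' => cylw v P (t+1) π'.1 * Ow P h (π'.1 (Fin.last (t+1))) L)]
    have hterm : ∀ p : ↥S × {u : U // h u = c},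
        cylw v P (t+1) ((E.symm p).1) * Ow P h ((E.symm p).1 (Fin.last (t+1))) L
          = cylw v P t p.1.1 * (P (p.1.1 (Fin.last t)) p.2.1 * Ow P h p.2.1 L) := by
      rintro ⟨⟨π, hπ⟩, ⟨u, hu⟩⟩
      rw [hE, snocEquiv_symm_coe t S h c, cylw_snoc, Fin.snoc_last]
      ring
    rw [show (∑' p : ↥S × {u : U // h u = c},
          cylw v P (t+1) ((E.symm p).1) * Ow P h ((E.symm p).1 (Fin.last (t+1))) L)
        = ∑' p : ↥S × {u : U // h u = c},
          cylw v P t p.1.1 * (P (p.1.1 (Fin.last t)) p.2.1 * Ow P h p.2.1 L)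
      from tsum_congr hterm]
    rw [ENNReal.tsum_prod (f := fun (π : ↥S) (u : {u : U // h u = c}) =>
      cylw v P t π.1 * (P (π.1 (Fin.last t)) u.1 * Ow P h u.1 L))]
    exact tsum_congr fun π => by
      rw [ENNReal.tsum_mul_left, ← Ow_cons P h (π.1 (Fin.last t)) c L]
end owmeas

section spec
variable {U : Type*} [Countable U] [MeasurableSpace U] [MeasurableSingletonClass U]
  {v : U → ℝ≥0∞} {P : U → U → ℝ≥0∞} {μ : Measure (ℕ → U)}

lemma ow_id {C : Type*} (PZ : C → C → ℝ≥0∞) :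
    ∀ (L : List C) (c : C), Ow PZ id c L = Zw PZ c L := by
  intro L
  induction L with
  | nil => intro c; rfl
  | cons c' L ih =>
    intro c
    show (∑' u' : C, if u' = c' then PZ c u' * Ow PZ id u' L else 0) = PZ c c' * Zw PZ c' L
    rw [tsum_eq_single c' (fun u' hu => by rw [if_neg hu]), if_pos rfl, ih c']

lemma meas_follow (hμ : IsMarkovChain v P μ) {C : Type*} (h : U → C)
    (t : ℕ) (u : U) (L : List C) :
    μ {ω | ω t = u ∧ ∀ i : Fin L.length, h (ω (t+1+i.1)) = L.get i}
      = μ {ω | ω t = u} * Ow P h u L := by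
  set S : Set (Fin (t+1) → U) := {π | π (Fin.last t) = u} with hS
  have h1 : {ω : ℕ → U | ω t = u ∧ ∀ i : Fin L.length, h (ω (t+1+i.1)) = L.get i}
      = {ω : ℕ → U | (fun i : Fin (t+1) => ω i.1) ∈ S
          ∧ ∀ i : Fin L.length, h (ω (t+1+i.1)) = L.get i} := rfl
  have h2 : {ω : ℕ → U | ω t = u} = {ω : ℕ → U | (fun i : Fin (t+1) => ω i.1) ∈ S} := rfl
  rw [h1, ow_meas hμ h L t S, h2, meas_proj hμ t S, ← ENNReal.tsum_mul_right]
  exact tsum_congr fun π => by rw [π.2]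

lemma follow_measurable {C : Type*} [MeasurableSpace C] [MeasurableSingletonClass C]
    (t : ℕ) (c : C) (L : List C) :
    MeasurableSet {ω : ℕ → C | ω t = c ∧ ∀ i : Fin L.length, ω (t+1+i.1) = L.get i} := by
  have : {ω : ℕ → C | ω t = c ∧ ∀ i : Fin L.length, ω (t+1+i.1) = L.get i}
      = ((fun ω : ℕ → C => ω t) ⁻¹' {c})
        ∩ ⋂ i : Fin L.length, (fun ω : ℕ → C => ω (t+1+i.1)) ⁻¹' {L.get i} := by
    ext ω; simp [Set.mem_iInter]
  rw [this]
  exact ((measurable_pi_apply t) (measurableSet_singleton c)).inter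
    (MeasurableSet.iInter fun i =>
      (measurable_pi_apply (t+1+i.1)) (measurableSet_singleton (L.get i)))
end spec

section comp
variable {B C : Type*} [Countable B] [MeasurableSpace B] [MeasurableSingletonClass B]
  [Countable C] [MeasurableSpace C] [MeasurableSingletonClass C]
  {αY : B → ℝ≥0∞} {PY : B → B → ℝ≥0∞} {μY : Measure (ℕ → B)}
  {αZ : C → ℝ≥0∞} {PZ : C → C → ℝ≥0∞} {μZ : Measure (ℕ → C)}
  {g : B → C}

lemma gmap_measurable : Measurable (fun (ω : ℕ → B) n => g (ω n)) :=
  measurable_pi_lambda _ fun n => (measurable_of_countable g).comp (measurable_pi_apply n)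

lemma YZ_bound (hY : IsMarkovChain αY PY μY) (hZ : IsMarkovChain αZ PZ μZ)
    (hgY : μY.map (fun ω n => g (ω n)) = μZ) (t : ℕ) (y : B) (L : List C) :
    μY {ω | ω t = y} * Ow PY g y L ≤ Zw PZ (g y) L := by
  rw [← meas_follow hY g t y L]
  have hsub : {ω : ℕ → B | ω t = y ∧ ∀ i : Fin L.length, g (ω (t+1+i.1)) = L.get i}
      ⊆ (fun (ω : ℕ → B) n => g (ω n)) ⁻¹'
        {ω : ℕ → C | ω t = g y ∧ ∀ i : Fin L.length, ω (t+1+i.1) = L.get i} := by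
    rintro ω ⟨h1, h2⟩
    exact ⟨by simp [h1], h2⟩
  calc μY {ω | ω t = y ∧ ∀ i : Fin L.length, g (ω (t+1+i.1)) = L.get i}
      ≤ μY ((fun (ω : ℕ → B) n => g (ω n)) ⁻¹'
        {ω : ℕ → C | ω t = g y ∧ ∀ i : Fin L.length, ω (t+1+i.1) = L.get i}) :=
        measure_mono hsub
    _ = μZ {ω : ℕ → C | ω t = g y ∧ ∀ i : Fin L.length, ω (t+1+i.1) = L.get i} := by
        rw [← hgY, Measure.map_apply gmap_measurable (follow_measurable t (g y) L)]
    _ = μZ {ω : ℕ → C | ω t = g y} * Ow PZ id (g y) L := by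
        have := meas_follow hZ (id : C → C) t (g y) L
        simpa using this
    _ ≤ 1 * Zw PZ (g y) L := by
        rw [ow_id]
        have : μZ {ω : ℕ → C | ω t = g y} ≤ 1 := by
          have := hZ.1
          exact prob_le_one
        exact mul_le_mul_left this _
    _ = Zw PZ (g y) L := one_mul _

lemma comp_zero (hY : IsMarkovChain αY PY μY) (hZ : IsMarkovChain αZ PZ μZ)
    (hgY : μY.map (fun ω n => g (ω n)) = μZ)
    (hBvis : ∀ b : B, ∃ t : ℕ, μY {ω | ω t = b} ≠ 0)
    (y b' : B) (hz : PZ (g y) (g b') = 0) : PY y b' = 0 := by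
  obtain ⟨t, ht⟩ := hBvis y
  have hb := YZ_bound hY hZ hgY t y [g b']
  have hZw : Zw PZ (g y) [g b'] = 0 := by
    show PZ (g y) (g b') * Zw PZ (g b') [] = 0
    rw [hz, zero_mul]
  rw [hZw] at hb
  have hb' : μY {ω | ω t = y} * Ow PY g y [g b'] = 0 := le_antisymm hb (zero_le)
  have hOw : PY y b' ≤ Ow PY g y [g b'] := by
    have : PY y b' ≤ ∑' u' : B, if g u' = g b' then PY y u' * Ow PY g u' [] else 0 := by
      have := ENNReal.le_tsum (f := fun u' : B =>
        if g u' = g b' then PY y u' * Ow PY g u' [] else 0) b'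
      rw [if_pos rfl] at this
      simpa [Ow] using this
    exact this
  rcases mul_eq_zero.mp hb' with h | h
  · exact absurd h ht
  · exact le_antisymm (hOw.trans (le_of_eq h)) (zero_le)
end comp

section claim1
variable {A B C : Type*} [Countable A] [Countable B] [Countable C]
  [MeasurableSpace A] [MeasurableSingletonClass A]
  [MeasurableSpace B] [MeasurableSingletonClass B]
  [MeasurableSpace C] [MeasurableSingletonClass C]
  {αX : A → ℝ≥0∞} {PX : A → A → ℝ≥0∞} {μX : Measure (ℕ → A)}
  {αY : B → ℝ≥0∞} {PY : B → B → ℝ≥0∞} {μY : Measure (ℕ → B)}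
  {αZ : C → ℝ≥0∞} {PZ : C → C → ℝ≥0∞} {μZ : Measure (ℕ → C)}
  {f : A → C} {g : B → C}

/-- if a path is not `PZ`-allowed from `g y`, then `Y` cannot follow it -/
lemma Yw_zero (hY : IsMarkovChain αY PY μY) (hZ : IsMarkovChain αZ PZ μZ)
    (hgY : μY.map (fun ω n => g (ω n)) = μZ)
    (hBvis : ∀ b : B, ∃ t : ℕ, μY {ω | ω t = b} ≠ 0) :
    ∀ (L : List C) (y : B), ¬ ZAll PZ (g y) L → Ow PY g y L = 0 := by
  intro L
  induction L with
  | nil => intro y hA; exact absurd trivial hA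
  | cons c' L ih =>
    intro y hA
    show (∑' b' : B, if g b' = c' then PY y b' * Ow PY g b' L else 0) = 0
    rw [ENNReal.tsum_eq_zero]
    intro b'
    by_cases hb : g b' = c'
    · rw [if_pos hb]
      by_cases hz : PZ (g y) c' = 0
      · rw [comp_zero hY hZ hgY hBvis y b' (by rw [hb]; exact hz), zero_mul]
      · have hA' : ¬ ZAll PZ c' L := fun hL => hA ⟨hz, hL⟩
        rw [ih b' (by rw [hb]; exact hA'), mul_zero]
    · rw [if_neg hb]

/-- representation of fibre sums of `phim` -/
lemma sumphi_repr (hPZ : IsStochastic PZ) (y : B) (ξ : {a : A // f a = g y} → ℝ≥0∞) (m : ℕ) :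
    ∑' a : {a : A // f a = g y}, ξ a * phim (Rmat PX PY PZ f g) m ⟨(a.1, y), a.2⟩
      = ∑' L : LenL C m, (∑' a : {a : A // f a = g y}, ξ a * Ow PX f a.1 L.1)
          * (if ZAll PZ (g y) L.1 then Ow PY g y L.1 / Zw PZ (g y) L.1 else 0) := by
  have h1 : ∀ a : {a : A // f a = g y},
      ξ a * phim (Rmat PX PY PZ f g) m ⟨(a.1, y), a.2⟩
        = ∑' L : LenL C m, ξ a * ((Ow PX f a.1 L.1)
            * (if ZAll PZ (g y) L.1 then Ow PY g y L.1 / Zw PZ (g y) L.1 else 0)) := by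
    intro a
    rw [phim_eq PX PY PZ f g hPZ m ⟨(a.1, y), a.2⟩, ← ENNReal.tsum_mul_left]
    apply tsum_congr
    intro L
    congr 1
    show WW PX PY PZ f g ⟨(a.1, y), a.2⟩ L.1 = _
    unfold WW
    simp only [a.2]
    by_cases hZA : ZAll PZ (g y) L.1
    · rw [if_pos hZA, if_pos hZA, mul_div_assoc]
    · rw [if_neg hZA, if_neg hZA, mul_zero]
  rw [tsum_congr h1, ENNReal.tsum_comm]
  apply tsum_congr
  intro L
  rw [tsum_congr (fun a : {a : A // f a = g y} => (mul_assoc (ξ a) _ _).symm),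
    ENNReal.tsum_mul_right]

/-- the fibre sums against `ν` are identically `1` -/
lemma sumphi_nu (hY : IsMarkovChain αY PY μY) (hZ : IsMarkovChain αZ PZ μZ)
    (hgY : μY.map (fun ω n => g (ω n)) = μZ)
    (hBvis : ∀ b : B, ∃ t : ℕ, μY {ω | ω t = b} ≠ 0)
    (hPZ : IsStochastic PZ)
    (ν : C → A → ℝ≥0∞)
    (hν0 : ∀ (c : C) (a : A), f a ≠ c → ν c a = 0)
    (hν1 : ∀ c : C, ∑' a : A, ν c a = 1)
    (hEL : ∀ (c c' : C) (a' : A), f a' = c' →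
      ∑' a : {x : A // f x = c}, ν c a.1 * PX a.1 a' = PZ c c' * ν c' a')
    (y : B) (m : ℕ) :
    ∑' a : {a : A // f a = g y}, ν (g y) a.1 * phim (Rmat PX PY PZ f g) m ⟨(a.1, y), a.2⟩ = 1 := by
  rw [sumphi_repr hPZ y (fun a => ν (g y) a.1) m]
  have h1 : ∀ L : LenL C m,
      (∑' a : {a : A // f a = g y}, ν (g y) a.1 * Ow PX f a.1 L.1)
          * (if ZAll PZ (g y) L.1 then Ow PY g y L.1 / Zw PZ (g y) L.1 else 0)
        = Ow PY g y L.1 := by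
    intro L
    rw [Ow_exact f ν PX PZ hν0 hν1 hEL L.1 (g y)]
    by_cases hZA : ZAll PZ (g y) L.1
    · rw [if_pos hZA, ENNReal.mul_div_cancel (Zw_ne_zero L.1 (g y) hZA) (Zw_ne_top hPZ L.1 (g y))]
    · rw [if_neg hZA, mul_zero, Yw_zero hY hZ hgY hBvis L.1 y hZA]
  rw [tsum_congr h1]
  exact Ow_sum hY.2.2.1 g m y
end claim1

lemma tsum_compl_eq {F : Type*} (s : Finset F) (h ξ : F → ℝ≥0∞)
    (h0 : ∀ a ∈ s, ξ a = 0) (h2 : ∀ a, a ∉ s → ξ a = h a) :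
    ∑' a : F, ξ a = ∑' x : {x : F // x ∉ s}, h x.1 := by
  have hsupp : Function.support ξ ⊆ {x : F | x ∉ s} := by
    intro a ha hmem
    exact ha (h0 a hmem)
  rw [← tsum_subtype_eq_of_support_subset hsupp]
  exact tsum_congr fun x => h2 x.1 x.2

lemma tsum_finset_split {F : Type*} (s : Finset F) (h : F → ℝ≥0∞) :
    ∑' a : F, h a = (∑ a ∈ s, h a) + ∑' x : {x : F // x ∉ s}, h x.1 := by
  have h1 : ∀ a : F, h a = (if a ∈ s then h a else 0) + (if a ∈ s then 0 else h a) := by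
    intro a; by_cases ha : a ∈ s <;> simp [ha]
  calc ∑' a : F, h a
      = ∑' a : F, ((if a ∈ s then h a else 0) + (if a ∈ s then 0 else h a)) := tsum_congr h1
  _ = (∑' a : F, (if a ∈ s then h a else 0)) + ∑' a : F, (if a ∈ s then 0 else h a) :=
      ENNReal.tsum_add
  _ = (∑ a ∈ s, h a) + ∑' x : {x : F // x ∉ s}, h x.1 := by
      congr 1
      · rw [tsum_eq_sum (s := s) (fun b hb => if_neg hb)]
        exact Finset.sum_congr rfl (fun a ha => if_pos ha)
      · exact tsum_compl_eq s h _ (fun a ha => if_pos ha) (fun a ha => if_neg ha)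

section claim1b
variable {A B C : Type*} [Countable A] [Countable B] [Countable C]
  [MeasurableSpace A] [MeasurableSingletonClass A]
  [MeasurableSpace B] [MeasurableSingletonClass B]
  [MeasurableSpace C] [MeasurableSingletonClass C]
  {αX : A → ℝ≥0∞} {PX : A → A → ℝ≥0∞} {μX : Measure (ℕ → A)}
  {αY : B → ℝ≥0∞} {PY : B → B → ℝ≥0∞} {μY : Measure (ℕ → B)}
  {αZ : C → ℝ≥0∞} {PZ : C → C → ℝ≥0∞} {μZ : Measure (ℕ → C)}
  {f : A → C} {g : B → C}

lemma sumphi_bound (hY : IsMarkovChain αY PY μY) (hZ : IsMarkovChain αZ PZ μZ)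
    (hgY : μY.map (fun ω n => g (ω n)) = μZ)
    (hPX : IsStochastic PX) (hPZ : IsStochastic PZ)
    (y : B) (t : ℕ) (ξ : {a : A // f a = g y} → ℝ≥0∞) (m : ℕ) :
    ∑' a : {a : A // f a = g y}, ξ a * phim (Rmat PX PY PZ f g) m ⟨(a.1, y), a.2⟩
      ≤ (∑' a : {a : A // f a = g y}, ξ a) * (μY {ω | ω t = y})⁻¹ := by
  set p := μY {ω | ω t = y} with hp
  rw [sumphi_repr hPZ y ξ m]
  have hbound : ∀ L : LenL C m,
      (∑' a : {a : A // f a = g y}, ξ a * Ow PX f a.1 L.1)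
          * (if ZAll PZ (g y) L.1 then Ow PY g y L.1 / Zw PZ (g y) L.1 else 0)
        ≤ (∑' a : {a : A // f a = g y}, ξ a * Ow PX f a.1 L.1) * p⁻¹ := by
    intro L
    apply mul_le_mul_right
    by_cases hZA : ZAll PZ (g y) L.1
    · rw [if_pos hZA]
      by_cases hp0 : p = 0
      · rw [hp0, ENNReal.inv_zero]; exact le_top
      · rw [ENNReal.div_le_iff (Zw_ne_zero L.1 (g y) hZA) (Zw_ne_top hPZ L.1 (g y))]
        have h1 : p * Ow PY g y L.1 ≤ Zw PZ (g y) L.1 := YZ_bound hY hZ hgY t y L.1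
        have hptop : p ≠ ∞ := by
          have hle1 : p ≤ 1 := by have := hY.1; exact prob_le_one
          exact fun h => by rw [h] at hle1; simp at hle1
        calc Ow PY g y L.1 = p⁻¹ * (p * Ow PY g y L.1) := by
              rw [← mul_assoc, ENNReal.inv_mul_cancel hp0 hptop, one_mul]
        _ ≤ p⁻¹ * Zw PZ (g y) L.1 := mul_le_mul_right h1 _
    · rw [if_neg hZA]; exact zero_le
  calc _ ≤ ∑' L : LenL C m,
        (∑' a : {a : A // f a = g y}, ξ a * Ow PX f a.1 L.1) * p⁻¹ :=
      Summable.tsum_le_tsum hbound ENNReal.summable ENNReal.summable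
  _ = (∑' L : LenL C m, ∑' a : {a : A // f a = g y}, ξ a * Ow PX f a.1 L.1) * p⁻¹ :=
      ENNReal.tsum_mul_right
  _ = (∑' a : {a : A // f a = g y}, ∑' L : LenL C m, ξ a * Ow PX f a.1 L.1) * p⁻¹ := by
      rw [ENNReal.tsum_comm]
  _ = (∑' a : {a : A // f a = g y}, ξ a) * p⁻¹ := by
      congr 1
      apply tsum_congr
      intro a
      rw [ENNReal.tsum_mul_left, Ow_sum hPX f m a.1, mul_one]

lemma claim1_fiber (hY : IsMarkovChain αY PY μY) (hZ : IsMarkovChain αZ PZ μZ)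
    (hgY : μY.map (fun ω n => g (ω n)) = μZ)
    (hBvis : ∀ b : B, ∃ t : ℕ, μY {ω | ω t = b} ≠ 0)
    (hPX : IsStochastic PX) (hPZ : IsStochastic PZ)
    (ν : C → A → ℝ≥0∞)
    (hν0 : ∀ (c : C) (a : A), f a ≠ c → ν c a = 0)
    (hν1 : ∀ c : C, ∑' a : A, ν c a = 1)
    (hEL : ∀ (c c' : C) (a' : A), f a' = c' →
      ∑' a : {x : A // f x = c}, ν c a.1 * PX a.1 a' = PZ c c' * ν c' a')
    (φ : Delta f g → ℝ≥0∞)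
    (hφ : ∀ d : Delta f g,
      Tendsto (fun m => phim (Rmat PX PY PZ f g) m d) atTop (𝓝 (φ d)))
    (y : B) :
    ∑' a : {a : A // f a = g y}, ν (g y) a.1 * φ ⟨(a.1, y), a.2⟩ = 1 := by
  obtain ⟨t, hpne⟩ := hBvis y
  set p := μY {ω | ω t = y} with hpdef
  have hptop : p ≠ ∞ := by
    have hle1 : p ≤ 1 := by have := hY.1; exact prob_le_one
    exact fun h => by rw [h] at hle1; simp at hle1
  have hνtop : ∀ a : A, ν (g y) a ≠ ∞ := by
    intro a htop
    have h := ENNReal.le_tsum (f := ν (g y)) a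
    rw [hν1 (g y), htop] at h
    simp at h
  have htend : ∀ a : {a : A // f a = g y},
      Tendsto (fun m => ν (g y) a.1 * phim (Rmat PX PY PZ f g) m ⟨(a.1, y), a.2⟩) atTop
        (𝓝 (ν (g y) a.1 * φ ⟨(a.1, y), a.2⟩)) :=
    fun a => ENNReal.Tendsto.const_mul (hφ _) (Or.inr (hνtop a.1))
  have hone : ∀ m, ∑' a : {a : A // f a = g y},
      ν (g y) a.1 * phim (Rmat PX PY PZ f g) m ⟨(a.1, y), a.2⟩ = 1 :=
    sumphi_nu hY hZ hgY hBvis hPZ ν hν0 hν1 hEL y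
  have hνsum : ∑' a : {a : A // f a = g y}, ν (g y) a.1 = 1 :=
    (tsum_subtype_eq_of_support_subset (f := ν (g y)) (s := {a : A | f a = g y})
      (fun a ha => by by_contra h; exact ha (hν0 (g y) a h))).trans (hν1 (g y))
  have hle : ∑' a : {a : A // f a = g y}, ν (g y) a.1 * φ ⟨(a.1, y), a.2⟩ ≤ 1 := by
    rw [ENNReal.tsum_eq_iSup_sum]
    apply iSup_le
    intro s
    have htends : Tendsto (fun m => ∑ a ∈ s,
        ν (g y) a.1 * phim (Rmat PX PY PZ f g) m ⟨(a.1, y), a.2⟩) atTop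
        (𝓝 (∑ a ∈ s, ν (g y) a.1 * φ ⟨(a.1, y), a.2⟩)) :=
      tendsto_finset_sum s (fun a _ => htend a)
    refine le_of_tendsto' htends (fun m => ?_)
    calc ∑ a ∈ s, ν (g y) a.1 * phim (Rmat PX PY PZ f g) m ⟨(a.1, y), a.2⟩
        ≤ ∑' a : {a : A // f a = g y},
            ν (g y) a.1 * phim (Rmat PX PY PZ f g) m ⟨(a.1, y), a.2⟩ := ENNReal.sum_le_tsum s
    _ = 1 := hone m
  have hge : (1 : ℝ≥0∞) ≤ ∑' a : {a : A // f a = g y}, ν (g y) a.1 * φ ⟨(a.1, y), a.2⟩ := by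
    refine ENNReal.le_of_forall_pos_le_add ?_
    intro ε hε _
    have hεp : (0 : ℝ≥0∞) < (ε : ℝ≥0∞) * p :=
      ENNReal.mul_pos (by exact_mod_cast ne_of_gt hε) hpne
    have htail0 : Tendsto (fun s : Finset {a : A // f a = g y} =>
        ∑' a : {x : {a : A // f a = g y} // x ∉ s}, ν (g y) a.1.1) atTop (𝓝 0) :=
      ENNReal.tendsto_tsum_compl_atTop_zero
        (f := fun a : {a : A // f a = g y} => ν (g y) a.1)
        (by rw [hνsum]; exact ENNReal.one_ne_top)
    obtain ⟨s, hs⟩ := (Tendsto.eventually_lt_const hεp htail0).exists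
    have hsle : ∑' a : {x : {a : A // f a = g y} // x ∉ s}, ν (g y) a.1.1 ≤ (ε : ℝ≥0∞) * p :=
      le_of_lt hs
    have htailm : ∀ m, ∑' a : {x : {a : A // f a = g y} // x ∉ s},
        ν (g y) a.1.1 * phim (Rmat PX PY PZ f g) m ⟨(a.1.1, y), a.1.2⟩ ≤ (ε : ℝ≥0∞) := by
      intro m
      have he1 : ∑' a : {a : A // f a = g y},
            (if a ∈ s then 0 else ν (g y) a.1) * phim (Rmat PX PY PZ f g) m ⟨(a.1, y), a.2⟩
          = ∑' a : {x : {a : A // f a = g y} // x ∉ s},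
            ν (g y) a.1.1 * phim (Rmat PX PY PZ f g) m ⟨(a.1.1, y), a.1.2⟩ :=
        tsum_compl_eq s
          (fun a : {a : A // f a = g y} =>
            ν (g y) a.1 * phim (Rmat PX PY PZ f g) m ⟨(a.1, y), a.2⟩)
          (fun a : {a : A // f a = g y} =>
            (if a ∈ s then 0 else ν (g y) a.1) * phim (Rmat PX PY PZ f g) m ⟨(a.1, y), a.2⟩)
          (fun a ha => by simp only [if_pos ha, zero_mul])
          (fun a ha => by simp only [if_neg ha])
      have he2 : ∑' a : {a : A // f a = g y}, (if a ∈ s then 0 else ν (g y) a.1)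
          = ∑' a : {x : {a : A // f a = g y} // x ∉ s}, ν (g y) a.1.1 :=
        tsum_compl_eq s (fun a : {a : A // f a = g y} => ν (g y) a.1)
          (fun a : {a : A // f a = g y} => (if a ∈ s then 0 else ν (g y) a.1))
          (fun a ha => if_pos ha) (fun a ha => if_neg ha)
      rw [← he1]
      calc _ ≤ (∑' a : {a : A // f a = g y}, (if a ∈ s then 0 else ν (g y) a.1)) * p⁻¹ :=
          sumphi_bound hY hZ hgY hPX hPZ y t _ m
      _ ≤ ((ε : ℝ≥0∞) * p) * p⁻¹ := mul_le_mul_left (by rw [he2]; exact hsle) _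
      _ = (ε : ℝ≥0∞) * (p * p⁻¹) := mul_assoc _ _ _
      _ ≤ (ε : ℝ≥0∞) * 1 := mul_le_mul_right (by
          rw [ENNReal.mul_inv_cancel hpne hptop]) _
      _ = (ε : ℝ≥0∞) := mul_one _
    have hsplit : ∀ m, (1 : ℝ≥0∞) ≤ (∑ a ∈ s,
        ν (g y) a.1 * phim (Rmat PX PY PZ f g) m ⟨(a.1, y), a.2⟩) + (ε : ℝ≥0∞) := by
      intro m
      have hdecomp := tsum_finset_split s
        (fun a : {a : A // f a = g y} =>
          ν (g y) a.1 * phim (Rmat PX PY PZ f g) m ⟨(a.1, y), a.2⟩)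
      rw [hone m] at hdecomp
      calc (1 : ℝ≥0∞) = _ := hdecomp
      _ ≤ (∑ a ∈ s, ν (g y) a.1 * phim (Rmat PX PY PZ f g) m ⟨(a.1, y), a.2⟩) + (ε : ℝ≥0∞) :=
          add_le_add (le_refl _) (htailm m)
    have hlim : Tendsto (fun m => (∑ a ∈ s,
        ν (g y) a.1 * phim (Rmat PX PY PZ f g) m ⟨(a.1, y), a.2⟩) + (ε : ℝ≥0∞)) atTop
        (𝓝 ((∑ a ∈ s, ν (g y) a.1 * φ ⟨(a.1, y), a.2⟩) + (ε : ℝ≥0∞))) :=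
      Tendsto.add_const _ (tendsto_finset_sum s (fun a _ => htend a))
    have h1 : (1 : ℝ≥0∞) ≤ (∑ a ∈ s, ν (g y) a.1 * φ ⟨(a.1, y), a.2⟩) + (ε : ℝ≥0∞) :=
      ge_of_tendsto' hlim hsplit
    calc (1 : ℝ≥0∞) ≤ _ := h1
    _ ≤ (∑' a : {a : A // f a = g y}, ν (g y) a.1 * φ ⟨(a.1, y), a.2⟩) + (ε : ℝ≥0∞) :=
        add_le_add (ENNReal.sum_le_tsum s) (le_refl _)
  exact le_antisymm hle hge
end claim1b

def fiberEquiv {A B C : Type*} (f : A → C) (g : B → C) (y : B) :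
    {a : A // f a = g y} ≃ {d : Delta f g // d.1.2 = y} where
  toFun a := ⟨⟨(a.1, y), a.2⟩, rfl⟩
  invFun d := ⟨d.1.1.1, d.1.2.trans (congrArg g d.2)⟩
  left_inv a := rfl
  right_inv d := by
    rcases d with ⟨⟨⟨a, b⟩, hab⟩, hb⟩
    simp only at hb
    subst hb
    rfl

section claim2
variable {A B C : Type*} [Countable A] [Countable B] [Countable C]
  [MeasurableSpace A] [MeasurableSingletonClass A]
  [MeasurableSpace B] [MeasurableSingletonClass B]
  [MeasurableSpace C] [MeasurableSingletonClass C]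
  {αX : A → ℝ≥0∞} {PX : A → A → ℝ≥0∞} {μX : Measure (ℕ → A)}
  {αY : B → ℝ≥0∞} {PY : B → B → ℝ≥0∞} {μY : Measure (ℕ → B)}
  {αZ : C → ℝ≥0∞} {PZ : C → C → ℝ≥0∞} {μZ : Measure (ℕ → C)}
  {f : A → C} {g : B → C}

lemma Rmat_ne_top (hPX : IsStochastic PX) (hPY : IsStochastic PY) (d e : Delta f g) :
    Rmat PX PY PZ f g d e ≠ ∞ := by
  unfold Rmat
  by_cases hz : PZ (f d.1.1) (f e.1.1) ≠ 0
  · rw [if_pos hz]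
    refine (ENNReal.div_lt_top ?_ hz).ne
    exact ENNReal.mul_ne_top
      (fun h => by have := (ENNReal.le_tsum e.1.1).trans (le_of_eq (hPX d.1.1)); rw [h] at this; simp at this)
      (fun h => by have := (ENNReal.le_tsum e.1.2).trans (le_of_eq (hPY d.1.2)); rw [h] at this; simp at this)
  · rw [if_neg hz]; exact ENNReal.zero_ne_top

lemma phi_superharmonic (hPX : IsStochastic PX) (hPY : IsStochastic PY)
    (φ : Delta f g → ℝ≥0∞)
    (hφ : ∀ d : Delta f g,
      Tendsto (fun m => phim (Rmat PX PY PZ f g) m d) atTop (𝓝 (φ d)))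
    (d : Delta f g) :
    ∑' e : Delta f g, Rmat PX PY PZ f g d e * φ e ≤ φ d := by
  rw [ENNReal.tsum_eq_iSup_sum]
  apply iSup_le
  intro t
  have h1 : Tendsto (fun m => ∑ e ∈ t, Rmat PX PY PZ f g d e * phim (Rmat PX PY PZ f g) m e)
      atTop (𝓝 (∑ e ∈ t, Rmat PX PY PZ f g d e * φ e)) :=
    tendsto_finset_sum t (fun e _ =>
      ENNReal.Tendsto.const_mul (hφ e) (Or.inr (Rmat_ne_top hPX hPY d e)))
  have h2 : Tendsto (fun m => phim (Rmat PX PY PZ f g) (m+1) d) atTop (𝓝 (φ d)) :=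
    (hφ d).comp (tendsto_add_atTop_nat 1)
  refine le_of_tendsto_of_tendsto' h1 h2 (fun m => ?_)
  calc ∑ e ∈ t, Rmat PX PY PZ f g d e * phim (Rmat PX PY PZ f g) m e
      ≤ ∑' e : Delta f g, Rmat PX PY PZ f g d e * phim (Rmat PX PY PZ f g) m e :=
      ENNReal.sum_le_tsum t
  _ = phim (Rmat PX PY PZ f g) (m+1) d := rfl

lemma claim2_fiber (hY : IsMarkovChain αY PY μY) (hZ : IsMarkovChain αZ PZ μZ)
    (hgY : μY.map (fun ω n => g (ω n)) = μZ)
    (hBvis : ∀ b : B, ∃ t : ℕ, μY {ω | ω t = b} ≠ 0)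
    (hPX : IsStochastic PX) (hPZ : IsStochastic PZ)
    (ν : C → A → ℝ≥0∞)
    (hν0 : ∀ (c : C) (a : A), f a ≠ c → ν c a = 0)
    (hν1 : ∀ c : C, ∑' a : A, ν c a = 1)
    (hEL : ∀ (c c' : C) (a' : A), f a' = c' →
      ∑' a : {x : A // f x = c}, ν c a.1 * PX a.1 a' = PZ c c' * ν c' a')
    (φ : Delta f g → ℝ≥0∞)
    (hφ : ∀ d : Delta f g,
      Tendsto (fun m => phim (Rmat PX PY PZ f g) m d) atTop (𝓝 (φ d)))
    (b b' : B) (e : Delta f g) (he : e.1.2 = b') :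
    ∑' d : {d : Delta f g // d.1.2 = b},
        (ν (g b) d.1.1.1 * φ d.1) * (Rmat PX PY PZ f g d.1 e * φ e / φ d.1)
      = PY b b' * (ν (g b') e.1.1 * φ e) := by
  have hPY : IsStochastic PY := hY.2.2.1
  -- bound: ν * φ ≤ 1 on the fibre
  have hbound : ∀ a : {a : A // f a = g b}, ν (g b) a.1 * φ ⟨(a.1, b), a.2⟩ ≤ 1 := by
    intro a
    have hνtop : ν (g b) a.1 ≠ ∞ := by
      intro htop
      have h := ENNReal.le_tsum (f := ν (g b)) a.1
      rw [hν1 (g b), htop] at h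
      simp at h
    have htend : Tendsto (fun m => ν (g b) a.1 * phim (Rmat PX PY PZ f g) m ⟨(a.1, b), a.2⟩)
        atTop (𝓝 (ν (g b) a.1 * φ ⟨(a.1, b), a.2⟩)) :=
      ENNReal.Tendsto.const_mul (hφ _) (Or.inr hνtop)
    refine le_of_tendsto' htend (fun m => ?_)
    calc ν (g b) a.1 * phim (Rmat PX PY PZ f g) m ⟨(a.1, b), a.2⟩
        ≤ ∑' a : {a : A // f a = g b},
            ν (g b) a.1 * phim (Rmat PX PY PZ f g) m ⟨(a.1, b), a.2⟩ := ENNReal.le_tsum a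
    _ = 1 := sumphi_nu hY hZ hgY hBvis hPZ ν hν0 hν1 hEL b m
  -- reindex to the fibre of A
  rw [← Equiv.tsum_eq (fiberEquiv f g b) (fun d : {d : Delta f g // d.1.2 = b} =>
    (ν (g b) d.1.1.1 * φ d.1) * (Rmat PX PY PZ f g d.1 e * φ e / φ d.1))]
  show (∑' a : {a : A // f a = g b},
      (ν (g b) a.1 * φ ⟨(a.1, b), a.2⟩)
        * (Rmat PX PY PZ f g ⟨(a.1, b), a.2⟩ e * φ e / φ ⟨(a.1, b), a.2⟩))
    = PY b b' * (ν (g b') e.1.1 * φ e)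
  have hterm : ∀ a : {a : A // f a = g b},
      (ν (g b) a.1 * φ ⟨(a.1, b), a.2⟩)
          * (Rmat PX PY PZ f g ⟨(a.1, b), a.2⟩ e * φ e / φ ⟨(a.1, b), a.2⟩)
        = ν (g b) a.1 * (Rmat PX PY PZ f g ⟨(a.1, b), a.2⟩ e * φ e) := by
    intro a
    by_cases hν : ν (g b) a.1 = 0
    · rw [hν, zero_mul, zero_mul, zero_mul]
    · have hφtop : φ ⟨(a.1, b), a.2⟩ ≠ ∞ := by
        intro htop
        have := hbound a
        rw [htop, ENNReal.mul_top hν] at this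
        simp at this
      by_cases hφ0 : φ ⟨(a.1, b), a.2⟩ = 0
      · have hRφ : Rmat PX PY PZ f g ⟨(a.1, b), a.2⟩ e * φ e = 0 := by
          have h1 : Rmat PX PY PZ f g ⟨(a.1, b), a.2⟩ e * φ e
              ≤ ∑' e' : Delta f g, Rmat PX PY PZ f g ⟨(a.1, b), a.2⟩ e' * φ e' :=
            ENNReal.le_tsum e
          have h2 := (phi_superharmonic hPX hPY φ hφ ⟨(a.1, b), a.2⟩).trans (le_of_eq hφ0)
          exact le_antisymm (h1.trans h2) (zero_le)
        rw [hRφ, hφ0]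
        simp
      · rw [div_eq_mul_inv]
        calc (ν (g b) a.1 * φ ⟨(a.1, b), a.2⟩)
              * (Rmat PX PY PZ f g ⟨(a.1, b), a.2⟩ e * φ e * (φ ⟨(a.1, b), a.2⟩)⁻¹)
            = (ν (g b) a.1 * (Rmat PX PY PZ f g ⟨(a.1, b), a.2⟩ e * φ e))
              * (φ ⟨(a.1, b), a.2⟩ * (φ ⟨(a.1, b), a.2⟩)⁻¹) := by ring
        _ = ν (g b) a.1 * (Rmat PX PY PZ f g ⟨(a.1, b), a.2⟩ e * φ e) := by
            rw [ENNReal.mul_inv_cancel hφ0 hφtop, mul_one]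
  rw [tsum_congr hterm]
  -- aggregate the exact lumping identity
  have hfe : f e.1.1 = g b' := e.2.trans (congrArg g he)
  have hAGG : ∑' a : {a : A // f a = g b},
      ν (g b) a.1 * Rmat PX PY PZ f g ⟨(a.1, b), a.2⟩ e = PY b b' * ν (g b') e.1.1 := by
    by_cases hz : PZ (g b) (g b') = 0
    · have hR0 : ∀ a : {a : A // f a = g b},
          Rmat PX PY PZ f g ⟨(a.1, b), a.2⟩ e = 0 := by
        intro a
        unfold Rmat
        simp only [a.2, hfe]
        rw [if_neg (by simpa using hz)]
      rw [tsum_congr (fun a => by rw [hR0 a, mul_zero]), tsum_zero,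
        comp_zero hY hZ hgY hBvis b b' hz, zero_mul]
    · set z := PZ (g b) (g b') with hzdef
      have hztop : z ≠ ∞ := by
        intro htop
        have := (ENNReal.le_tsum (g b')).trans (le_of_eq (hPZ (g b)))
        rw [← hzdef, htop] at this
        simp at this
      have hRval : ∀ a : {a : A // f a = g b},
          Rmat PX PY PZ f g ⟨(a.1, b), a.2⟩ e = PX a.1 e.1.1 * PY b b' / z := by
        intro a
        unfold Rmat
        simp only [a.2, hfe, he]
        rw [if_pos (by simpa using hz)]
      calc ∑' a : {a : A // f a = g b}, ν (g b) a.1 * Rmat PX PY PZ f g ⟨(a.1, b), a.2⟩ e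
          = ∑' a : {a : A // f a = g b},
            (ν (g b) a.1 * PX a.1 e.1.1) * (PY b b' * z⁻¹) := by
            apply tsum_congr
            intro a
            rw [hRval a, div_eq_mul_inv]
            ring
      _ = (∑' a : {a : A // f a = g b}, ν (g b) a.1 * PX a.1 e.1.1) * (PY b b' * z⁻¹) :=
          ENNReal.tsum_mul_right
      _ = (z * ν (g b') e.1.1) * (PY b b' * z⁻¹) := by rw [hEL (g b) (g b') e.1.1 hfe]
      _ = (PY b b' * ν (g b') e.1.1) * (z * z⁻¹) := by ring
      _ = PY b b' * ν (g b') e.1.1 := by rw [ENNReal.mul_inv_cancel hz hztop, mul_one]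
  calc ∑' a : {a : A // f a = g b},
        ν (g b) a.1 * (Rmat PX PY PZ f g ⟨(a.1, b), a.2⟩ e * φ e)
      = ∑' a : {a : A // f a = g b},
        (ν (g b) a.1 * Rmat PX PY PZ f g ⟨(a.1, b), a.2⟩ e) * φ e :=
      tsum_congr (fun a => (mul_assoc _ _ _).symm)
  _ = (∑' a : {a : A // f a = g b},
        ν (g b) a.1 * Rmat PX PY PZ f g ⟨(a.1, b), a.2⟩ e) * φ e := ENNReal.tsum_mul_right
  _ = (PY b b' * ν (g b') e.1.1) * φ e := by rw [hAGG]
  _ = PY b b' * (ν (g b') e.1.1 * φ e) := mul_assoc _ _ _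
end claim2

lemma markov_zero {U : Type*} [MeasurableSpace U] {v : U → ℝ≥0∞} {P : U → U → ℝ≥0∞}
    {μ : Measure (ℕ → U)} (hμ : IsMarkovChain v P μ) (u : U) :
    μ {ω | ω 0 = u} = v u := by
  have h := hμ.2.2.2 0 (fun _ => u)
  have hset : {ω : ℕ → U | ∀ i ≤ 0, ω i = (fun _ => u) i} = {ω : ℕ → U | ω 0 = u} := by
    ext ω
    constructor
    · intro hh; exact hh 0 (le_refl 0)
    · intro hh i hi
      rcases Nat.le_zero.mp hi with rfl
      exact hh
  rw [hset] at h
  rw [h]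
  simp

section claim3
variable {A B C : Type*} [Countable A] [Countable B] [Countable C]
  [MeasurableSpace A] [MeasurableSingletonClass A]
  [MeasurableSpace B] [MeasurableSingletonClass B]
  [MeasurableSpace C] [MeasurableSingletonClass C]
  {αX : A → ℝ≥0∞} {PX : A → A → ℝ≥0∞} {μX : Measure (ℕ → A)}
  {αY : B → ℝ≥0∞} {PY : B → B → ℝ≥0∞} {μY : Measure (ℕ → B)}
  {αZ : C → ℝ≥0∞} {PZ : C → C → ℝ≥0∞} {μZ : Measure (ℕ → C)}
  {f : A → C} {g : B → C}

lemma zero_meas_set' {U : Type*} [MeasurableSpace U] [MeasurableSingletonClass U] (u : U) :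
    MeasurableSet {ω : ℕ → U | ω 0 = u} := by
  have h : {ω : ℕ → U | ω 0 = u} = (fun ω : ℕ → U => ω 0) ⁻¹' {u} := rfl
  rw [h]
  exact (measurable_pi_apply 0) (measurableSet_singleton u)

lemma alphaZ_fiber (hX : IsMarkovChain αX PX μX) (hZ : IsMarkovChain αZ PZ μZ)
    (hfX : μX.map (fun ω n => f (ω n)) = μZ) (c : C) :
    αZ c = ∑' a : {a : A // f a = c}, αX a.1 := by
  rw [← markov_zero hZ c, ← hfX,
    Measure.map_apply (gmap_measurable (g := f)) (zero_meas_set' c)]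
  have hpre : (fun (ω : ℕ → A) n => f (ω n)) ⁻¹' {ω : ℕ → C | ω 0 = c}
      = {ω : ℕ → A | f (ω 0) = c} := rfl
  rw [hpre]
  have hset : {ω : ℕ → A | f (ω 0) = c} = ⋃ a : {a : A // f a = c}, {ω : ℕ → A | ω 0 = a.1} := by
    ext ω
    simp only [Set.mem_setOf_eq, Set.mem_iUnion]
    constructor
    · intro hh; exact ⟨⟨ω 0, hh⟩, rfl⟩
    · rintro ⟨a, ha⟩; rw [ha]; exact a.2
  have hdisj : Pairwise (Function.onFun Disjoint
      (fun a : {a : A // f a = c} => {ω : ℕ → A | ω 0 = a.1})) := by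
    rintro a a' hne
    simp only [Function.onFun, Set.disjoint_left]
    intro ω h1 h2
    exact hne (Subtype.ext ((h1 : ω 0 = a.1).symm.trans h2))
  rw [hset, measure_iUnion hdisj (fun a => zero_meas_set' a.1)]
  exact tsum_congr fun a => markov_zero hX a.1

lemma alphaY_le (hY : IsMarkovChain αY PY μY) (hZ : IsMarkovChain αZ PZ μZ)
    (hgY : μY.map (fun ω n => g (ω n)) = μZ) (b : B) :
    αY b ≤ αZ (g b) := by
  rw [← markov_zero hY b, ← markov_zero hZ (g b), ← hgY,
    Measure.map_apply (gmap_measurable (g := g)) (zero_meas_set' (g b))]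
  apply measure_mono
  intro ω hω
  show g (ω 0) = g b
  rw [(hω : ω 0 = b)]

lemma claim3 (hX : IsMarkovChain αX PX μX) (hY : IsMarkovChain αY PY μY)
    (hZ : IsMarkovChain αZ PZ μZ)
    (hfX : μX.map (fun ω n => f (ω n)) = μZ)
    (hgY : μY.map (fun ω n => g (ω n)) = μZ)
    (ν : C → A → ℝ≥0∞)
    (hν0 : ∀ (c : C) (a : A), f a ≠ c → ν c a = 0)
    (hν1 : ∀ c : C, ∑' a : A, ν c a = 1)
    (hcc : ∃ w : C → ℝ≥0∞, ∑' c, w c = 1 ∧ ∀ a : A, αX a = ∑' c, w c * ν c a)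
    (φ : Delta f g → ℝ≥0∞) (d : Delta f g) :
    alphaW αX αY αZ f g φ d
      = ∑' y : B, αY y * (if d.1.2 = y then ν (g d.1.2) d.1.1 * φ d else 0) := by
  obtain ⟨w, hw1, hw2⟩ := hcc
  have hrhs : ∑' y : B, αY y * (if d.1.2 = y then ν (g d.1.2) d.1.1 * φ d else 0)
      = αY d.1.2 * (ν (g d.1.2) d.1.1 * φ d) := by
    rw [tsum_eq_single d.1.2 (fun y hy => by
      rw [if_neg (fun h => hy h.symm), mul_zero])]
    rw [if_pos rfl]
  rw [hrhs]
  have hαX : ∀ a : A, αX a = w (f a) * ν (f a) a := by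
    intro a
    rw [hw2 a]
    exact tsum_eq_single (f a) (fun c hc => by
      rw [hν0 c a (fun h => hc h.symm), mul_zero])
  have hνfib : ∀ c : C, ∑' a : {a : A // f a = c}, ν c a.1 = 1 := fun c =>
    (tsum_subtype_eq_of_support_subset (f := ν c) (s := {a : A | f a = c})
      (fun a ha => by by_contra h; exact ha (hν0 c a h))).trans (hν1 c)
  have hwZ : ∀ c : C, αZ c = w c := by
    intro c
    rw [alphaZ_fiber hX hZ hfX c,
      tsum_congr (fun a : {a : A // f a = c} => by rw [hαX a.1, a.2]),
      ENNReal.tsum_mul_left, hνfib c, mul_one]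
  have hwtop : ∀ c : C, w c ≠ ∞ := by
    intro c htop
    have h := ENNReal.le_tsum (f := w) c
    rw [hw1, htop] at h
    simp at h
  unfold alphaW
  by_cases hz : αZ (f d.1.1) = 0
  · rw [if_neg (by simpa using hz)]
    have hY0 : αY d.1.2 = 0 := by
      have h1 := alphaY_le hY hZ hgY d.1.2
      rw [← d.2, hz] at h1
      exact le_antisymm h1 (zero_le)
    rw [hY0, zero_mul]
  · rw [if_pos (by simpa using hz)]
    have hwne : w (f d.1.1) ≠ 0 := fun h => hz (by rw [hwZ, h])
    rw [hαX d.1.1, hwZ (f d.1.1), div_eq_mul_inv]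
    calc w (f d.1.1) * ν (f d.1.1) d.1.1 * αY d.1.2 * (w (f d.1.1))⁻¹ * φ d
        = (αY d.1.2 * (ν (f d.1.1) d.1.1 * φ d)) * (w (f d.1.1) * (w (f d.1.1))⁻¹) := by ring
    _ = αY d.1.2 * (ν (f d.1.1) d.1.1 * φ d) := by
        rw [ENNReal.mul_inv_cancel hwne (hwtop (f d.1.1)), mul_one]
    _ = αY d.1.2 * (ν (g d.1.2) d.1.1 * φ d) := by rw [d.2]
end claim3

/-- **Exact lumping case (Proposition `g exact proj1 exact`).** If `f` is an exact lumping of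
`MC(α_X,P_X)` to `MC(α_Z,P_Z)` with respect to a family `(ν_c)_{c ∈ C}`, then the projection
`proj² : Δ' → B` is an exact lumping of `MC(α,P)` to `MC(α_Y,P_Y)`: explicitly, the family
`μ_y(a,b) = ν_{g(b)}(a) * φ(a,b)` if `b = y` and `0` otherwise consists of probability vectors
on the fibres of `proj²`, satisfies the exact lumping equation for `P` and `P_Y`, and
`α = Σ_{y ∈ B} α_Y(y) μ_y`. -/
theorem statement_6
    {A B C : Type*} [Countable A] [Countable B] [Countable C]
    [MeasurableSpace A] [MeasurableSingletonClass A]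
    [MeasurableSpace B] [MeasurableSingletonClass B]
    [MeasurableSpace C] [MeasurableSingletonClass C]
    (αX : A → ℝ≥0∞) (PX : A → A → ℝ≥0∞) (μX : Measure (ℕ → A))
    (αY : B → ℝ≥0∞) (PY : B → B → ℝ≥0∞) (μY : Measure (ℕ → B))
    (αZ : C → ℝ≥0∞) (PZ : C → C → ℝ≥0∞) (μZ : Measure (ℕ → C))
    (f : A → C) (g : B → C)
    (hX : IsMarkovChain αX PX μX) (hY : IsMarkovChain αY PY μY)
    (hZ : IsMarkovChain αZ PZ μZ)
    (hfX : μX.map (fun ω n => f (ω n)) = μZ)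
    (hgY : μY.map (fun ω n => g (ω n)) = μZ)
    (hAvis : ∀ a : A, ∃ t : ℕ, μX {ω | ω t = a} ≠ 0)
    (hBvis : ∀ b : B, ∃ t : ℕ, μY {ω | ω t = b} ≠ 0)
    (hfsurj : Function.Surjective f)
    (ν : C → A → ℝ≥0∞)
    (hν0 : ∀ (c : C) (a : A), f a ≠ c → ν c a = 0)
    (hν1 : ∀ c : C, ∑' a : A, ν c a = 1)
    (hEL : ∀ (c c' : C) (a' : A), f a' = c' →
      ∑' a : {x : A // f x = c}, ν c a.1 * PX a.1 a' = PZ c c' * ν c' a')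
    (hcc : ∃ w : C → ℝ≥0∞, ∑' c, w c = 1 ∧ ∀ a : A, αX a = ∑' c, w c * ν c a)
    (φ : Delta f g → ℝ≥0∞)
    (hφ : ∀ d : Delta f g,
      Tendsto (fun m => phim (Rmat PX PY PZ f g) m d) atTop (𝓝 (φ d))) :
    (∀ y : B, ∑' d : {d : Delta f g // d.1.2 = y}, ν (g y) d.1.1.1 * φ d.1 = 1) ∧
    (∀ (b b' : B) (e : Delta f g), e.1.2 = b' →
      ∑' d : {d : Delta f g // d.1.2 = b},
        (ν (g b) d.1.1.1 * φ d.1) * (Rmat PX PY PZ f g d.1 e * φ e / φ d.1)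
        = PY b b' * (ν (g b') e.1.1 * φ e)) ∧
    (∀ d : Delta f g,
      alphaW αX αY αZ f g φ d
        = ∑' y : B, αY y * (if d.1.2 = y then ν (g d.1.2) d.1.1 * φ d else 0)) := by
  refine ⟨?_, ?_, ?_⟩
  · intro y
    rw [← Equiv.tsum_eq (fiberEquiv f g y)
      (fun d : {d : Delta f g // d.1.2 = y} => ν (g y) d.1.1.1 * φ d.1)]
    show (∑' a : {a : A // f a = g y}, ν (g y) a.1 * φ ⟨(a.1, y), a.2⟩) = 1
    exact claim1_fiber hY hZ hgY hBvis hX.2.2.1 hZ.2.2.1 ν hν0 hν1 hEL φ hφ y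
  · intro b b' e he
    exact claim2_fiber hY hZ hgY hBvis hX.2.2.1 hZ.2.2.1 ν hν0 hν1 hEL φ hφ b b' e he
  · intro d
    exact claim3 hX hY hZ hfX hgY ν hν0 hν1 hcc φ d
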